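/- Let p be a prime number and let 𝔪 be the ideal of ℤ[X] generated by p and 1 − X. Then: (a) the constant polynomial p belongs to 𝔪 but not to 𝔪^2; (b) the polynomial 1 − X belongs to 𝔪 but not to 𝔪^2; and (c) the polynomial 1 − X^p belongs to 𝔪^2 but not to 𝔪^3 (i.e. |p|_𝔪 = |1 − X|_𝔪 = p^{−1} while |1 − X^p|_𝔪 = p^{−2}). -/

import Mathlib

open Polynomial

private lemma aux_coeff_mul (p : ℤ) (n : ℕ) (A F : ℤ[X])
    (hF : ∀ j < n, p ^ (n - j) ∣ F.coeff j) :
    ∀ k ≤ n, p ^ (n - k) ∣ (A * F).coeff k := by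
  intro k hk
  rw [coeff_mul]
  refine Finset.dvd_sum fun x hx => ?_
  rw [Finset.HasAntidiagonal.mem_antidiagonal] at hx
  rcases lt_or_ge x.2 n with h | h
  · exact Dvd.dvd.mul_left ((pow_dvd_pow p (by omega)).trans (hF x.2 h)) _
  · have : n - k = 0 := by omega
    simp [this]

private lemma key_lemma (p : ℤ) (n : ℕ) (f : ℤ[X])
    (hf : f ∈ Ideal.span {C p, 1 - X} ^ n) :
    ∀ k < n, p ^ (n - k) ∣ (f.comp (1 - X)).coeff k := by
  induction n generalizing f with
  | zero => intro k hk; omega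
  | succ n ih =>
    rw [pow_succ] at hf
    refine Submodule.mul_induction_on hf ?_ ?_
    · intro g hg m hm k hk
      rw [Ideal.mem_span_pair] at hm
      obtain ⟨a, b, hab⟩ := hm
      have hF := ih g hg
      have hcomp : (g * m).comp (1 - X) =
          C p * (a.comp (1 - X) * g.comp (1 - X)) +
          X * (b.comp (1 - X) * g.comp (1 - X)) := by
        rw [← hab]
        simp only [mul_comp, add_comp, sub_comp, one_comp, X_comp, C_comp]
        ring
      rw [hcomp, coeff_add, coeff_C_mul]
      have h1 : p ^ (n + 1 - k) ∣ p * (a.comp (1 - X) * g.comp (1 - X)).coeff k := by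
        have := aux_coeff_mul p n (a.comp (1 - X)) (g.comp (1 - X)) hF k (by omega)
        calc p ^ (n + 1 - k) = p * p ^ (n - k) := by
              rw [← pow_succ']
              congr 1
              omega
          _ ∣ p * (a.comp (1 - X) * g.comp (1 - X)).coeff k := mul_dvd_mul_left p this
      refine dvd_add h1 ?_
      rcases k with _ | j
      · simp [coeff_mul, Finset.Nat.antidiagonal_zero]
      · rw [coeff_X_mul]
        have := aux_coeff_mul p n (b.comp (1 - X)) (g.comp (1 - X)) hF j (by omega)
        have he : n + 1 - (j + 1) = n - j := by omega
        rw [he]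
        exact this
    · intro x y hx hy k hk
      rw [add_comp, coeff_add]
      exact dvd_add (hx k hk) (hy k hk)
/-- With 𝔪 = (p, 1 - X) ⊆ ℤ[X]: p and 1 − X lie in 𝔪 ∖ 𝔪², while
1 − X^p lies in 𝔪² ∖ 𝔪³; that is, |p|_𝔪 = |1 − X|_𝔪 = p^{-1} and
|1 − X^p|_𝔪 = p^{-2}. -/
theorem madic_norms_of_p_one_sub_X_and_one_sub_X_pow_p (p : ℕ) (hp : p.Prime)
    (𝔪 : Ideal (Polynomial ℤ))
    (h𝔪 : 𝔪 = Ideal.span {Polynomial.C (p : ℤ), 1 - Polynomial.X}) :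
    ((Polynomial.C (p : ℤ) ∈ 𝔪 ∧ Polynomial.C (p : ℤ) ∉ 𝔪 ^ 2)
      ∧ ((1 - Polynomial.X : Polynomial ℤ) ∈ 𝔪 ∧ (1 - Polynomial.X : Polynomial ℤ) ∉ 𝔪 ^ 2))
      ∧ ((1 - Polynomial.X ^ p : Polynomial ℤ) ∈ 𝔪 ^ 2
          ∧ (1 - Polynomial.X ^ p : Polynomial ℤ) ∉ 𝔪 ^ 3) := by
  subst h𝔪
  have hppos : (0:ℤ) < (p:ℤ) := by exact_mod_cast hp.pos
  have hp2 : 2 ≤ (p:ℤ) := by exact_mod_cast hp.two_le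
  have hnd2 : ¬ ((p:ℤ))^2 ∣ (p:ℤ) := by
    intro h
    have := Int.le_of_dvd hppos h
    nlinarith
  have hnd1 : ¬ ((p:ℤ)) ∣ (1:ℤ) := by
    intro h
    have := Int.le_of_dvd one_pos h
    omega
  -- memberships in 𝔪
  have hmemp : C (p:ℤ) ∈ Ideal.span {C (p:ℤ), 1 - X} :=
    Ideal.mem_span_pair.mpr ⟨1, 0, by ring⟩
  have hmemx : (1 - X : ℤ[X]) ∈ Ideal.span {C (p:ℤ), 1 - X} :=
    Ideal.mem_span_pair.mpr ⟨0, 1, by ring⟩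
  -- geometric sum
  have hroot : IsRoot (∑ i ∈ Finset.range p, (X:ℤ[X])^i - C (p:ℤ)) 1 := by
    simp [IsRoot, eval_finset_sum]
  obtain ⟨q, hq⟩ := (dvd_iff_isRoot).mpr hroot
  rw [C_1] at hq
  have hsum : (∑ i ∈ Finset.range p, (X:ℤ[X])^i) ∈ Ideal.span {C (p:ℤ), 1 - X} :=
    Ideal.mem_span_pair.mpr ⟨1, -q, by linear_combination -hq⟩
  have hgeom : (1 - X^p : ℤ[X]) = (∑ i ∈ Finset.range p, X^i) * (1 - X) := by
    have h := geom_sum_mul (X : ℤ[X]) p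
    linear_combination h
  have hmem2 : (1 - X^p : ℤ[X]) ∈ Ideal.span {C (p:ℤ), 1 - X} ^ 2 := by
    rw [hgeom, sq]
    exact Ideal.mul_mem_mul hsum hmemx
  -- non-memberships via key_lemma
  refine ⟨⟨⟨hmemp, fun h => ?_⟩, hmemx, fun h => ?_⟩, hmem2, fun h => ?_⟩
  · have := key_lemma (p:ℤ) 2 _ h 0 (by omega)
    simp at this
    exact hnd2 this
  · have := key_lemma (p:ℤ) 2 _ h 1 (by omega)
    simp at this
    exact hnd1 this
  · have := key_lemma (p:ℤ) 3 _ h 1 (by omega)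
    have hc : ((1 - X^p : ℤ[X]).comp (1 - X)).coeff 1 = p := by
      simp only [sub_comp, one_comp, pow_comp, X_comp, coeff_sub]
      have h2 := Polynomial.coeff_derivative ((1 - X : ℤ[X])^p) 0
      rw [Polynomial.derivative_pow] at h2
      simp at h2
      rw [← h2]
      have h3 : ((1 - X : ℤ[X]) ^ (p - 1)).coeff 0 = 1 := by
        rw [coeff_zero_eq_eval_zero]; simp
      rw [h3]
      simp [coeff_one]
    rw [hc] at this
    norm_num at this
    exact hnd2 this
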